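/- Let G act properly by isometries on a proper geodesic space X with basepoint o. Suppose every element g of a set W ⊆ G admits a factorization g = g₁·ĝ·g₂ with g₁, g₂, ĝ ∈ G, |d(o,go) − d(o,g₁o) − d(o,g₂o) − d(o,ĝo)| ≤ 4M, ĝ ∈ V for a fixed subset V ⊆ G, and d(o,ĝo) ≥ θ·d(o,go) − 2M, where θ ∈ (0,1] and M > 0 are fixed. If G has purely exponential growth with exponent δ and V is exponentially negligible, then W is exponentially negligible. -/

import Mathlib

open Finset Set

private lemma aux_ncard_biUnion_le {α β : Type*} (S : Finset α) (T : α → Set β) :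
    (⋃ a ∈ S, T a).ncard ≤ ∑ a ∈ S, (T a).ncard := by
  classical
  induction S using Finset.induction_on with
  | empty => simp
  | @insert b s hb ih =>
    rw [Finset.set_biUnion_insert, Finset.sum_insert hb]
    exact (Set.ncard_union_le _ _).trans (by omega)

private lemma aux_ncard_prod {α β : Type*} (s : Set α) (t : Set β) :
    (s ×ˢ t).ncard = s.ncard * t.ncard := by
  rw [← Nat.card_coe_set_eq, ← Nat.card_coe_set_eq, ← Nat.card_coe_set_eq,
    Nat.card_congr (Equiv.Set.prod s t), Nat.card_prod]

private lemma aux_geom_sum_le {r : ℝ} (h0 : 0 < r) (h1 : r < 1) (L B : ℕ) :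
    ∑ ℓ ∈ Finset.Icc L B, r ^ ℓ ≤ r ^ L / (1 - r) := by
  have hgs : ∀ m : ℕ, ∑ j ∈ Finset.range m, r ^ j ≤ 1 / (1 - r) := by
    intro m
    rw [geom_sum_eq h1.ne]
    have h2 : (r ^ m - 1) / (r - 1) = (1 - r ^ m) / (1 - r) := by
      rw [← neg_div_neg_eq]; ring_nf
    rw [h2]
    exact (div_le_div_iff_of_pos_right (by linarith)).mpr (by nlinarith [pow_nonneg h0.le m])
  have hsub : Finset.Icc L B ⊆ (Finset.range (B + 1 - L)).image (· + L) := by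
    intro x hx
    simp only [Finset.mem_Icc] at hx
    simp only [Finset.mem_image, Finset.mem_range]
    exact ⟨x - L, by omega, by omega⟩
  calc ∑ ℓ ∈ Finset.Icc L B, r ^ ℓ
      ≤ ∑ ℓ ∈ (Finset.range (B + 1 - L)).image (· + L), r ^ ℓ :=
        Finset.sum_le_sum_of_subset_of_nonneg hsub (fun i _ _ => pow_nonneg h0.le i)
    _ = ∑ j ∈ Finset.range (B + 1 - L), r ^ (j + L) :=
        Finset.sum_image (by intro a _ b _ hab; dsimp only at hab; omega)
    _ = r ^ L * ∑ j ∈ Finset.range (B + 1 - L), r ^ j := by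
        rw [Finset.mul_sum]; exact Finset.sum_congr rfl (fun j _ => by ring)
    _ ≤ r ^ L * (1 / (1 - r)) := by
        have := hgs (B + 1 - L)
        exact mul_le_mul_of_nonneg_left this (pow_nonneg h0.le L)
    _ = r ^ L / (1 - r) := by ring

private lemma aux_poly {t : ℝ} (ht0 : 0 < t) (ht1 : t < 1) (a : ℝ) (ha : 0 ≤ a) (n : ℕ) :
    ((n : ℝ) + a) * t ^ n ≤ 1 / (1 - t) + a := by
  have hber : 1 + (n : ℝ) * ((1 - t) / t) ≤ (1 / t) ^ n := by
    have := one_add_mul_le_pow (a := (1 - t) / t) (by nlinarith [div_nonneg (by linarith : (0:ℝ) ≤ 1 - t) ht0.le]) n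
    have h1t : (1 : ℝ) + (1 - t) / t = 1 / t := by field_simp; ring
    rwa [h1t] at this
  have key : (n : ℝ) * t ^ n * (1 - t) ≤ t := by
    have e1 : (1 + (n : ℝ) * ((1 - t) / t)) * (t * t ^ n) ≤ (1 / t) ^ n * (t * t ^ n) :=
      mul_le_mul_of_nonneg_right hber (by positivity)
    have e2 : (1 + (n : ℝ) * ((1 - t) / t)) * (t * t ^ n) =
        t * t ^ n + (n : ℝ) * t ^ n * (1 - t) := by field_simp
    have e3 : ((1 : ℝ) / t) ^ n * (t * t ^ n) = t := by
      rw [div_pow, one_pow]; field_simp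
    rw [e2, e3] at e1
    nlinarith [mul_pos ht0 (pow_pos ht0 n)]
  have hnt : (n : ℝ) * t ^ n ≤ 1 / (1 - t) := by
    rw [le_div_iff₀ (by linarith)]
    linarith
  have htn1 : t ^ n ≤ 1 := pow_le_one₀ ht0.le ht1.le
  nlinarith [pow_nonneg ht0.le n, mul_le_mul_of_nonneg_left htn1 ha]
set_option maxHeartbeats 1600000 in
theorem stmt17 {G : Type*} [Group G] [Countable G]
    {X : Type*} [MetricSpace X] [ProperSpace X] [MulAction G X]
    (hiso : ∀ (g : G) (x y : X), dist (g • x) (g • y) = dist x y)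
    (o : X)
    (hproper : ∀ R : ℝ, {g : G | dist o (g • o) ≤ R}.Finite)
    (θ M : ℝ) (hθ0 : 0 < θ) (hθ1 : θ ≤ 1) (hM : 0 < M)
    (W V : Set G)
    (hfact : ∀ g ∈ W, ∃ g₁ ghat g₂ : G, g = g₁ * ghat * g₂ ∧
      |dist o (g • o) - dist o (g₁ • o) - dist o (g₂ • o) - dist o (ghat • o)|
        ≤ 4 * M ∧
      ghat ∈ V ∧
      θ * dist o (g • o) - 2 * M ≤ dist o (ghat • o))
    (δ : ℝ) (hδ : 0 < δ)
    (c₁ c₂ : ℝ) (hc₁ : 0 < c₁) (hc₂ : 0 < c₂)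
    (hgrowth : ∀ n : ℕ, 1 ≤ n →
      c₁ * Real.exp (n * δ) ≤ (Nat.card {g : G | dist o (g • o) ≤ (n : ℝ)} : ℝ) ∧
      (Nat.card {g : G | dist o (g • o) ≤ (n : ℝ)} : ℝ) ≤ c₂ * Real.exp (n * δ))
    (c lam : ℝ) (hc : 0 < c) (hlam0 : 0 < lam) (hlam1 : lam < 1)
    (hVneg : ∀ n : ℕ, 1 ≤ n →
      (Nat.card {g : G | g ∈ V ∧ dist o (g • o) ≤ (n : ℝ)} : ℝ) ≤
        c * lam ^ n * (Nat.card {g : G | dist o (g • o) ≤ (n : ℝ)} : ℝ)) :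
    ∃ c' lam' : ℝ, 0 < c' ∧ 0 < lam' ∧ lam' < 1 ∧
      ∀ n : ℕ, 1 ≤ n →
        (Nat.card {g : G | g ∈ W ∧ dist o (g • o) ≤ (n : ℝ)} : ℝ) ≤
          c' * lam' ^ n * (Nat.card {g : G | dist o (g • o) ≤ (n : ℝ)} : ℝ) := by
  classical
  -- a total choice of factorizations
  have hfact' : ∀ g : G, ∃ p : G × G × G, g ∈ W →
      g = p.1 * p.2.1 * p.2.2 ∧
      |dist o (g • o) - dist o (p.1 • o) - dist o (p.2.2 • o) - dist o (p.2.1 • o)| ≤ 4 * M ∧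
      p.2.1 ∈ V ∧ θ * dist o (g • o) - 2 * M ≤ dist o (p.2.1 • o) := by
    intro g
    by_cases hg : g ∈ W
    · obtain ⟨g₁, gh, g₂, h1, h2, h3, h4⟩ := hfact g hg
      exact ⟨(g₁, gh, g₂), fun _ => ⟨h1, h2, h3, h4⟩⟩
    · exact ⟨(1, 1, 1), fun h => absurd h hg⟩
  choose F hF using hfact'
  set A : ℕ := ⌈4 * M⌉₊ with hA
  have hAM : 4 * M ≤ (A : ℝ) := Nat.le_ceil _
  have hA0 : (0:ℝ) ≤ A := by positivity
  set t : ℝ := lam ^ (θ / 4 : ℝ) with htdef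
  have ht0 : 0 < t := Real.rpow_pos_of_pos hlam0 _
  have ht1 : t < 1 := Real.rpow_lt_one hlam0.le hlam1 (by positivity)
  set E : ℝ := Real.exp (-(δ / 2)) with hEdef
  have hE0 : 0 < E := Real.exp_pos _
  have hE1 : E < 1 := Real.exp_lt_one_iff.mpr (by linarith)
  set lam' : ℝ := max t E with hlamdef
  have hlam'0 : 0 < lam' := lt_of_lt_of_le ht0 (le_max_left _ _)
  have hlam'1 : lam' < 1 := max_lt ht1 hE1
  set n₀ : ℕ := ⌈(2 + 4 * M) / θ⌉₊ with hn₀def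
  set C₁ : ℝ := c * c₂ ^ 3 * Real.exp (((A : ℝ) + 4) * δ) * lam ^ (-(2 * M)) / (1 - lam)
    with hC₁def
  have hC₁0 : 0 < C₁ := by
    rw [hC₁def]
    have h1 := Real.rpow_pos_of_pos hlam0 (-(2 * M))
    exact div_pos (by positivity) (by linarith)
  set C₂ : ℝ := 1 / (1 - t) + ((A : ℝ) + 3) with hC₂def
  have hC₂0 : 0 < C₂ := by
    rw [hC₂def]
    have h1 : 0 < 1 / (1 - t) := by apply div_pos one_pos; linarith
    linarith
  set c' : ℝ := lam'⁻¹ ^ n₀ + (c₂ * Real.exp (3 * δ / 2) + C₁ * C₂) / c₁ with hc'def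
  have hc'0 : 0 < c' := by
    rw [hc'def]
    have h1 : 0 < lam'⁻¹ ^ n₀ := by positivity
    have h2 : 0 ≤ (c₂ * Real.exp (3 * δ / 2) + C₁ * C₂) / c₁ := by positivity
    linarith
  refine ⟨c', lam', hc'0, hlam'0, hlam'1, ?_⟩
  intro n hn1
  rw [Nat.card_coe_set_eq, Nat.card_coe_set_eq]
  have hNn0 : (0:ℝ) ≤ ({g : G | dist o (g • o) ≤ (n : ℝ)}.ncard : ℝ) := by positivity
  by_cases hn₀ : n < n₀
  · -- trivial bound for small n
    have hsub : {g : G | g ∈ W ∧ dist o (g • o) ≤ (n : ℝ)} ⊆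
        {g : G | dist o (g • o) ≤ (n : ℝ)} := fun g hg => hg.2
    have h1 : ({g : G | g ∈ W ∧ dist o (g • o) ≤ (n : ℝ)}.ncard : ℝ) ≤
        ({g : G | dist o (g • o) ≤ (n : ℝ)}.ncard : ℝ) :=
      Nat.cast_le.2 (Set.ncard_le_ncard hsub (hproper _))
    have h2 : (1 : ℝ) ≤ c' * lam' ^ n := by
      have ha : (1:ℝ) ≤ lam'⁻¹ := one_le_inv_iff₀.2 ⟨hlam'0, hlam'1.le⟩
      have hb : lam'⁻¹ ^ n ≤ lam'⁻¹ ^ n₀ := pow_le_pow_right₀ ha hn₀.le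
      have hd : lam'⁻¹ ^ n * lam' ^ n = 1 := by
        rw [← mul_pow, inv_mul_cancel₀ hlam'0.ne', one_pow]
      have he : 0 ≤ (c₂ * Real.exp (3 * δ / 2) + C₁ * C₂) / c₁ := by positivity
      have hf : lam'⁻¹ ^ n * lam' ^ n ≤ c' * lam' ^ n := by
        apply mul_le_mul_of_nonneg_right _ (by positivity)
        calc lam'⁻¹ ^ n ≤ lam'⁻¹ ^ n₀ := hb
          _ ≤ c' := by rw [hc'def]; linarith
      linarith [hd ▸ hf]
    calc ({g : G | g ∈ W ∧ dist o (g • o) ≤ (n : ℝ)}.ncard : ℝ)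
        ≤ 1 * ({g : G | dist o (g • o) ≤ (n : ℝ)}.ncard : ℝ) := by linarith
      _ ≤ c' * lam' ^ n * ({g : G | dist o (g • o) ≤ (n : ℝ)}.ncard : ℝ) :=
        mul_le_mul_of_nonneg_right h2 hNn0
  · push_neg at hn₀
    have hn₀θ : 2 + 4 * M ≤ θ * n := by
      have h₁ : (2 + 4 * M) / θ ≤ (n₀ : ℝ) := Nat.le_ceil _
      have h₂ : (n₀ : ℝ) ≤ n := Nat.cast_le.2 hn₀
      have := (div_le_iff₀ hθ0).1 (h₁.trans h₂)
      linarith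
    -- ball cardinality bounds
    have hball : ∀ j : ℕ, ({g : G | dist o (g • o) ≤ (j : ℝ)}.ncard : ℝ) ≤
        c₂ * Real.exp (((j : ℝ) + 1) * δ) := by
      intro j
      have hsub : {g : G | dist o (g • o) ≤ (j : ℝ)} ⊆
          {g : G | dist o (g • o) ≤ ((j + 1 : ℕ) : ℝ)} := by
        intro g hg; simp only [Set.mem_setOf_eq] at *; push_cast; linarith
      have h1 : ({g : G | dist o (g • o) ≤ (j : ℝ)}.ncard : ℝ) ≤
          ({g : G | dist o (g • o) ≤ ((j + 1 : ℕ) : ℝ)}.ncard : ℝ) :=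
        Nat.cast_le.2 (Set.ncard_le_ncard hsub (hproper _))
      have h2 := (hgrowth (j + 1) (by omega)).2
      rw [Nat.card_coe_set_eq] at h2
      have heq : Real.exp (((j + 1 : ℕ) : ℝ) * δ) = Real.exp (((j : ℝ) + 1) * δ) := by
        push_cast; ring_nf
      exact (h1.trans h2).trans (le_of_eq (by rw [heq]))
    have hVball : ∀ ℓ : ℕ, 1 ≤ ℓ →
        ({g : G | g ∈ V ∧ dist o (g • o) ≤ (ℓ : ℝ)}.ncard : ℝ) ≤
        c * lam ^ ℓ * (c₂ * Real.exp ((ℓ : ℝ) * δ)) := by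
      intro ℓ hℓ
      have h1 := hVneg ℓ hℓ
      have h2 := (hgrowth ℓ hℓ).2
      rw [Nat.card_coe_set_eq, Nat.card_coe_set_eq] at h1
      rw [Nat.card_coe_set_eq] at h2
      calc ({g : G | g ∈ V ∧ dist o (g • o) ≤ (ℓ : ℝ)}.ncard : ℝ)
          ≤ c * lam ^ ℓ * ({g : G | dist o (g • o) ≤ (ℓ : ℝ)}.ncard : ℝ) := h1
        _ ≤ c * lam ^ ℓ * (c₂ * Real.exp ((ℓ : ℝ) * δ)) :=
          mul_le_mul_of_nonneg_left h2 (by positivity)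
    -- split into small and big displacement
    set Ws : Set G := {g : G | g ∈ W ∧ dist o (g • o) ≤ (n : ℝ) ∧
      dist o (g • o) ≤ (n : ℝ) / 2} with hWsdef
    set Wb : Set G := {g : G | g ∈ W ∧ dist o (g • o) ≤ (n : ℝ) ∧
      (n : ℝ) / 2 < dist o (g • o)} with hWbdef
    have hWsfin : Ws.Finite := (hproper (n : ℝ)).subset (fun g hg => hg.2.1)
    have hWbfin : Wb.Finite := (hproper (n : ℝ)).subset (fun g hg => hg.2.1)
    have hsplit : {g : G | g ∈ W ∧ dist o (g • o) ≤ (n : ℝ)} ⊆ Ws ∪ Wb := by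
      intro g hg
      by_cases h : dist o (g • o) ≤ (n : ℝ) / 2
      · exact Or.inl ⟨hg.1, hg.2, h⟩
      · exact Or.inr ⟨hg.1, hg.2, lt_of_not_ge h⟩
    have hsplitcard : ({g : G | g ∈ W ∧ dist o (g • o) ≤ (n : ℝ)}.ncard : ℝ) ≤
        (Ws.ncard : ℝ) + (Wb.ncard : ℝ) := by
      have h1 : {g : G | g ∈ W ∧ dist o (g • o) ≤ (n : ℝ)}.ncard ≤ (Ws ∪ Wb).ncard :=
        Set.ncard_le_ncard hsplit (hWsfin.union hWbfin)
      have h2 := Set.ncard_union_le Ws Wb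
      push_cast
      exact_mod_cast (h1.trans h2)
    -- small part
    have hsmall : (Ws.ncard : ℝ) ≤
        c₂ * Real.exp (3 * δ / 2) * E ^ n * Real.exp ((n : ℝ) * δ) := by
      set j : ℕ := (n + 1) / 2 with hjdef
      have hj2 : (n : ℝ) ≤ 2 * (j : ℝ) := by
        have : n ≤ 2 * j := by omega
        exact_mod_cast this
      have hjn : 2 * (j:ℕ) ≤ n + 1 := by omega
      have hjn' : (2:ℝ) * (j:ℝ) ≤ (n:ℝ) + 1 := by exact_mod_cast hjn
      have hsub : Ws ⊆ {g : G | dist o (g • o) ≤ (j : ℝ)} := by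
        intro g hg
        simp only [Set.mem_setOf_eq]
        have := hg.2.2
        linarith
      have h1 : (Ws.ncard : ℝ) ≤ ({g : G | dist o (g • o) ≤ (j : ℝ)}.ncard : ℝ) :=
        Nat.cast_le.2 (Set.ncard_le_ncard hsub (hproper _))
      have h2 := hball j
      have h3 : c₂ * Real.exp (((j : ℝ) + 1) * δ) ≤
          c₂ * Real.exp (3 * δ / 2) * E ^ n * Real.exp ((n : ℝ) * δ) := by
        have hEn : E ^ n = Real.exp ((n : ℝ) * (-(δ / 2))) := by
          rw [hEdef, ← Real.exp_nat_mul]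
        rw [hEn, mul_assoc, mul_assoc, ← Real.exp_add, ← Real.exp_add]
        have hexp : ((j : ℝ) + 1) * δ ≤ 3 * δ / 2 + ((n : ℝ) * (-(δ / 2)) + (n : ℝ) * δ) := by
          nlinarith [mul_nonneg (by linarith : (0:ℝ) ≤ (n : ℝ) + 1 - 2 * (j : ℝ)) hδ.le]
        exact mul_le_mul_of_nonneg_left (Real.exp_le_exp.mpr hexp) hc₂.le
      exact (h1.trans h2).trans h3
    -- big part
    have hbig : (Wb.ncard : ℝ) ≤ C₁ * C₂ * t ^ n * Real.exp ((n : ℝ) * δ) := by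
      set L : ℕ := ⌈θ * (n : ℝ) / 2 - 2 * M⌉₊ with hLdef
      have hL1 : 1 ≤ L := by
        rw [hLdef, Nat.one_le_ceil_iff]; linarith
      have hLle : θ * (n : ℝ) / 2 - 2 * M ≤ (L : ℝ) := Nat.le_ceil _
      set T : ℕ × ℕ → Set (G × G × G) := fun p =>
        {g : G | dist o (g • o) ≤ (p.1 : ℝ)} ×ˢ
          ({g : G | g ∈ V ∧ dist o (g • o) ≤ (p.2 : ℝ)} ×ˢ
            {g : G | dist o (g • o) ≤ ((n + A + 2 - (p.1 + p.2) : ℕ) : ℝ)}) with hTdef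
      set S : Finset (ℕ × ℕ) :=
        (Finset.range (n + A + 3) ×ˢ Finset.Icc L (n + A + 2)).filter
          (fun p => p.1 + p.2 ≤ n + A + 2) with hSdef
      have hmaps : ∀ g ∈ Wb, F g ∈ ⋃ p ∈ S, T p := by
        intro g hg
        obtain ⟨hgW, hgn, hgb⟩ := hg
        obtain ⟨hprod, habs, hVg, hlow⟩ := hF g hgW
        have hd1 : (0:ℝ) ≤ dist o ((F g).1 • o) := dist_nonneg
        have hd2 : (0:ℝ) ≤ dist o ((F g).2.2 • o) := dist_nonneg
        have hdh : (0:ℝ) ≤ dist o ((F g).2.1 • o) := dist_nonneg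
        have hsum : dist o ((F g).1 • o) + dist o ((F g).2.2 • o) +
            dist o ((F g).2.1 • o) ≤ dist o (g • o) + 4 * M := by
          have := (abs_le.1 habs).1
          linarith
        set k : ℕ := ⌈dist o ((F g).1 • o)⌉₊ with hkdef
        set ℓ : ℕ := ⌈dist o ((F g).2.1 • o)⌉₊ with hℓdef
        have hkd : dist o ((F g).1 • o) ≤ (k : ℝ) := Nat.le_ceil _
        have hld : dist o ((F g).2.1 • o) ≤ (ℓ : ℝ) := Nat.le_ceil _
        have hk1 : (k : ℝ) < dist o ((F g).1 • o) + 1 := Nat.ceil_lt_add_one hd1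
        have hl1 : (ℓ : ℝ) < dist o ((F g).2.1 • o) + 1 := Nat.ceil_lt_add_one hdh
        have hkle : k ≤ n + A := by
          rw [hkdef, Nat.ceil_le]; push_cast; linarith
        have hlle : ℓ ≤ n + A := by
          rw [hℓdef, Nat.ceil_le]; push_cast; linarith
        have hkl : k + ℓ ≤ n + A + 2 := by
          have h : (k : ℝ) + (ℓ : ℝ) ≤ (n : ℝ) + (A : ℝ) + 2 := by linarith
          exact_mod_cast h
        have hLℓ : L ≤ ℓ := by
          rw [hℓdef, hLdef]
          apply Nat.ceil_le_ceil
          have h5 : θ * ((n : ℝ) / 2) ≤ θ * dist o (g • o) :=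
            mul_le_mul_of_nonneg_left hgb.le hθ0.le
          linarith
        have hd2m : dist o ((F g).2.2 • o) ≤ ((n + A + 2 - (k + ℓ) : ℕ) : ℝ) := by
          have hcast : ((n + A + 2 - (k + ℓ) : ℕ) : ℝ) = (n : ℝ) + A + 2 - ((k : ℝ) + ℓ) := by
            rw [Nat.cast_sub hkl]; push_cast; ring
          rw [hcast]; linarith
        have hpS : (k, ℓ) ∈ S := by
          rw [hSdef]
          simp only [Finset.mem_filter, Finset.mem_product, Finset.mem_range, Finset.mem_Icc]
          exact ⟨⟨by omega, hLℓ, by omega⟩, hkl⟩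
        have hpT : F g ∈ T (k, ℓ) := by
          rw [hTdef]
          exact Set.mem_prod.mpr ⟨hkd, Set.mem_prod.mpr ⟨⟨hVg, hld⟩, hd2m⟩⟩
        exact Set.mem_iUnion.2 ⟨(k, ℓ), Set.mem_iUnion.2 ⟨hpS, hpT⟩⟩
      have hinj : Set.InjOn F Wb := by
        intro a ha b hb hab
        have h1 := (hF a ha.1).1
        have h2 := (hF b hb.1).1
        rw [h1, h2, hab]
      have hUfin : (⋃ p ∈ S, T p).Finite := by
        apply Set.Finite.biUnion S.finite_toSet
        intro p _
        rw [hTdef]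
        exact (hproper _).prod (((hproper ((p.2 : ℕ) : ℝ)).subset
          (fun g hg => hg.2)).prod (hproper _))
      have h1 : Wb.ncard ≤ (⋃ p ∈ S, T p).ncard :=
        Set.ncard_le_ncard_of_injOn F hmaps hinj hUfin
      have h2 : (⋃ p ∈ S, T p).ncard ≤ ∑ p ∈ S, (T p).ncard := aux_ncard_biUnion_le S T
      set K : ℝ := c * c₂ ^ 3 * Real.exp (((n : ℝ) + A + 4) * δ) with hKdef
      have hK0 : (0:ℝ) ≤ K := by rw [hKdef]; positivity
      have h3 : ∀ p ∈ S, ((T p).ncard : ℝ) ≤ K * lam ^ p.2 := by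
        intro p hp
        rw [hSdef] at hp
        simp only [Finset.mem_filter, Finset.mem_product, Finset.mem_range, Finset.mem_Icc] at hp
        obtain ⟨⟨hpk, hpl1, hpl2⟩, hpsum⟩ := hp
        obtain ⟨k, ℓ⟩ := p
        dsimp only at hpk hpl1 hpl2 hpsum ⊢
        have hTeq : (T (k, ℓ)).ncard =
            {g : G | dist o (g • o) ≤ (k : ℝ)}.ncard *
              ({g : G | g ∈ V ∧ dist o (g • o) ≤ (ℓ : ℝ)}.ncard *
                {g : G | dist o (g • o) ≤ ((n + A + 2 - (k + ℓ) : ℕ) : ℝ)}.ncard) := by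
          rw [hTdef]
          dsimp only
          rw [aux_ncard_prod, aux_ncard_prod]
        rw [hTeq]
        push_cast
        set m : ℕ := n + A + 2 - (k + ℓ) with hmdef
        have hmsum : k + ℓ + m = n + A + 2 := by omega
        have hmsumR : (k : ℝ) + (ℓ : ℝ) + (m : ℝ) = (n : ℝ) + (A : ℝ) + 2 := by
          exact_mod_cast hmsum
        have b1 := hball k
        have b2 := hVball ℓ (le_trans hL1 hpl1)
        have b3 := hball m
        calc ({g : G | dist o (g • o) ≤ (k : ℝ)}.ncard : ℝ) *
              (({g : G | g ∈ V ∧ dist o (g • o) ≤ (ℓ : ℝ)}.ncard : ℝ) *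
                ({g : G | dist o (g • o) ≤ (m : ℝ)}.ncard : ℝ))
            ≤ (c₂ * Real.exp (((k : ℝ) + 1) * δ)) *
              ((c * lam ^ ℓ * (c₂ * Real.exp ((ℓ : ℝ) * δ))) *
                (c₂ * Real.exp (((m : ℝ) + 1) * δ))) := by
              apply mul_le_mul b1 (mul_le_mul b2 b3 (by positivity) (by positivity))
                (by positivity) (by positivity)
          _ = K * lam ^ ℓ := by
              have hexp : Real.exp (((k : ℝ) + 1) * δ) * Real.exp ((ℓ : ℝ) * δ) *
                  Real.exp (((m : ℝ) + 1) * δ) = Real.exp (((n : ℝ) + A + 4) * δ) := by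
                rw [← Real.exp_add, ← Real.exp_add]
                congr 1
                linear_combination δ * hmsumR
              rw [hKdef, ← hexp]
              ring
      have h5 : (Wb.ncard : ℝ) ≤ ∑ p ∈ S, ((T p).ncard : ℝ) := by
        calc (Wb.ncard : ℝ) ≤ ((∑ p ∈ S, (T p).ncard : ℕ) : ℝ) :=
              Nat.cast_le.2 (h1.trans h2)
          _ = ∑ p ∈ S, ((T p).ncard : ℝ) := Nat.cast_sum _ _
      have h6 : ∑ p ∈ S, ((T p).ncard : ℝ) ≤ ∑ p ∈ S, K * lam ^ p.2 := Finset.sum_le_sum h3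
      have hS' : S ⊆ Finset.range (n + A + 3) ×ˢ Finset.Icc L (n + A + 2) := by
        rw [hSdef]; exact Finset.filter_subset _ _
      have h7 : ∑ p ∈ S, K * lam ^ p.2 ≤
          ∑ p ∈ Finset.range (n + A + 3) ×ˢ Finset.Icc L (n + A + 2), K * lam ^ p.2 :=
        Finset.sum_le_sum_of_subset_of_nonneg hS' (fun p _ _ => by positivity)
      have h8 : ∑ p ∈ Finset.range (n + A + 3) ×ˢ Finset.Icc L (n + A + 2), K * lam ^ p.2 =
          ((n + A + 3 : ℕ) : ℝ) * ∑ ℓ ∈ Finset.Icc L (n + A + 2), K * lam ^ ℓ := by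
        rw [Finset.sum_product]
        dsimp only
        rw [Finset.sum_const, Finset.card_range, nsmul_eq_mul]
      have h9 : ∑ ℓ ∈ Finset.Icc L (n + A + 2), K * lam ^ ℓ ≤ K * (lam ^ L / (1 - lam)) := by
        rw [← Finset.mul_sum]
        exact mul_le_mul_of_nonneg_left (aux_geom_sum_le hlam0 hlam1 _ _) hK0
      have h10 : (lam : ℝ) ^ L ≤ lam ^ (-(2 * M)) * t ^ n * t ^ n := by
        have e3 : lam ^ (θ * (n : ℝ) / 2 - 2 * M) = lam ^ (-(2 * M)) * t ^ n * t ^ n := by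
          rw [htdef]
          rw [← Real.rpow_natCast (lam ^ (θ / 4 : ℝ)) n, ← Real.rpow_mul hlam0.le,
            ← Real.rpow_add hlam0, ← Real.rpow_add hlam0]
          congr 1
          ring
        calc (lam : ℝ) ^ L = lam ^ ((L : ℝ)) := (Real.rpow_natCast lam L).symm
          _ ≤ lam ^ (θ * (n : ℝ) / 2 - 2 * M) :=
              Real.rpow_le_rpow_of_exponent_ge hlam0 hlam1.le hLle
          _ = lam ^ (-(2 * M)) * t ^ n * t ^ n := e3
      have hKsplit : K = c * c₂ ^ 3 * (Real.exp ((n : ℝ) * δ) * Real.exp (((A : ℝ) + 4) * δ)) := by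
        rw [hKdef, ← Real.exp_add]
        congr 2
        ring
      have hpoly : ((n : ℝ) + ((A : ℝ) + 3)) * t ^ n ≤ C₂ := by
        have := aux_poly ht0 ht1 ((A : ℝ) + 3) (by positivity) n
        rw [hC₂def]
        linarith
      calc (Wb.ncard : ℝ)
          ≤ ∑ p ∈ S, ((T p).ncard : ℝ) := h5
        _ ≤ ∑ p ∈ S, K * lam ^ p.2 := h6
        _ ≤ ∑ p ∈ Finset.range (n + A + 3) ×ˢ Finset.Icc L (n + A + 2), K * lam ^ p.2 := h7
        _ = ((n + A + 3 : ℕ) : ℝ) * ∑ ℓ ∈ Finset.Icc L (n + A + 2), K * lam ^ ℓ := h8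
        _ ≤ ((n + A + 3 : ℕ) : ℝ) * (K * (lam ^ L / (1 - lam))) :=
            mul_le_mul_of_nonneg_left h9 (by positivity)
        _ ≤ ((n + A + 3 : ℕ) : ℝ) * (K * (lam ^ (-(2 * M)) * t ^ n * t ^ n / (1 - lam))) := by
            apply mul_le_mul_of_nonneg_left _ (by positivity)
            apply mul_le_mul_of_nonneg_left _ hK0
            exact (div_le_div_iff_of_pos_right (by linarith)).mpr h10
        _ = (((n : ℝ) + ((A : ℝ) + 3)) * t ^ n) * C₁ * t ^ n * Real.exp ((n : ℝ) * δ) := by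
            rw [hKsplit, hC₁def]
            push_cast
            ring
        _ ≤ C₂ * C₁ * t ^ n * Real.exp ((n : ℝ) * δ) :=
            mul_le_mul_of_nonneg_right
              (mul_le_mul_of_nonneg_right
                (mul_le_mul_of_nonneg_right hpoly hC₁0.le) (pow_nonneg ht0.le n))
              (Real.exp_pos _).le
        _ = C₁ * C₂ * t ^ n * Real.exp ((n : ℝ) * δ) := by ring
    -- combine
    have hP := (hgrowth n hn1).1
    rw [Nat.card_coe_set_eq] at hP
    have hEn' : E ^ n ≤ lam' ^ n := pow_le_pow_left₀ hE0.le (le_max_right _ _) n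
    have htn' : t ^ n ≤ lam' ^ n := pow_le_pow_left₀ ht0.le (le_max_left _ _) n
    have hPexp : (0:ℝ) < Real.exp ((n : ℝ) * δ) := Real.exp_pos _
    calc ({g : G | g ∈ W ∧ dist o (g • o) ≤ (n : ℝ)}.ncard : ℝ)
        ≤ (Ws.ncard : ℝ) + (Wb.ncard : ℝ) := hsplitcard
      _ ≤ (c₂ * Real.exp (3 * δ / 2) + C₁ * C₂) * lam' ^ n * Real.exp ((n : ℝ) * δ) := by
          have e1 : c₂ * Real.exp (3 * δ / 2) * E ^ n * Real.exp ((n : ℝ) * δ) ≤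
              c₂ * Real.exp (3 * δ / 2) * lam' ^ n * Real.exp ((n : ℝ) * δ) :=
            mul_le_mul_of_nonneg_right
              (mul_le_mul_of_nonneg_left hEn' (by positivity)) hPexp.le
          have e2 : C₁ * C₂ * t ^ n * Real.exp ((n : ℝ) * δ) ≤
              C₁ * C₂ * lam' ^ n * Real.exp ((n : ℝ) * δ) :=
            mul_le_mul_of_nonneg_right
              (mul_le_mul_of_nonneg_left htn' (by positivity)) hPexp.le
          have e3 : c₂ * Real.exp (3 * δ / 2) * lam' ^ n * Real.exp ((n : ℝ) * δ) +
              C₁ * C₂ * lam' ^ n * Real.exp ((n : ℝ) * δ) =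
              (c₂ * Real.exp (3 * δ / 2) + C₁ * C₂) * lam' ^ n * Real.exp ((n : ℝ) * δ) := by
            ring
          exact le_trans (add_le_add hsmall hbig) (le_trans (add_le_add e1 e2) (le_of_eq e3))
      _ ≤ (c₂ * Real.exp (3 * δ / 2) + C₁ * C₂) * lam' ^ n *
            (({g : G | dist o (g • o) ≤ (n : ℝ)}.ncard : ℝ) / c₁) := by
          apply mul_le_mul_of_nonneg_left _ (by positivity)
          rw [le_div_iff₀ hc₁]
          linarith
      _ ≤ c' * lam' ^ n * ({g : G | dist o (g • o) ≤ (n : ℝ)}.ncard : ℝ) := by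
          have : (c₂ * Real.exp (3 * δ / 2) + C₁ * C₂) / c₁ ≤ c' := by
            rw [hc'def]
            have : 0 < lam'⁻¹ ^ n₀ := by positivity
            linarith
          calc (c₂ * Real.exp (3 * δ / 2) + C₁ * C₂) * lam' ^ n *
                (({g : G | dist o (g • o) ≤ (n : ℝ)}.ncard : ℝ) / c₁)
              = ((c₂ * Real.exp (3 * δ / 2) + C₁ * C₂) / c₁) * lam' ^ n *
                ({g : G | dist o (g • o) ≤ (n : ℝ)}.ncard : ℝ) := by ring
            _ ≤ c' * lam' ^ n * ({g : G | dist o (g • o) ≤ (n : ℝ)}.ncard : ℝ) := by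
                apply mul_le_mul_of_nonneg_right _ hNn0
                exact mul_le_mul_of_nonneg_right this (by positivity)
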